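/- arXiv:2107.11280 — 3 statements merged into one kernel-verified Lean document; each statement's English description precedes it below -/
import Mathlib

section
/- For any set U of finite words over Σ, the set U^ω is the greatest fixed point of the operator X ↦ L ∪ (U \ {ε})·X on the powerset of Σ^{≤ω}, where L = U* if ε ∈ U and L = ∅ otherwise. -/
/-- Finite or infinite words over `σ`. -/
def FIWord (σ : Type) : Type := List σ ⊕ Stream' σ

/-- Concatenation of a finite word with a finite-or-infinite word. -/
def wcat {σ : Type} (u : List σ) : FIWord σ → FIWord σ
  | Sum.inl v => Sum.inl (u ++ v)
  | Sum.inr s => Sum.inr (u ++ₛ s)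

/-- Elementwise concatenation of two languages of finite words. -/
def lcatF {σ : Type} (U V : Set (List σ)) : Set (List σ) :=
  {w | ∃ u ∈ U, ∃ v ∈ V, w = u ++ v}

/-- Elementwise concatenation of a language of finite words with a language of
finite-or-infinite words. -/
def lcat {σ : Type} (U : Set (List σ)) (V : Set (FIWord σ)) : Set (FIWord σ) :=
  {w | ∃ u ∈ U, ∃ v ∈ V, w = wcat u v}

/-- Kleene star of a language of finite words. -/
def star {σ : Type} (U : Set (List σ)) : Set (List σ) :=
  {w | ∃ L : List (List σ), (∀ u ∈ L, u ∈ U) ∧ w = L.flatten}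

/-- Concatenation `f 0 ++ f 1 ++ ⋯ ++ f (n-1)`. -/
def prefixCat {σ : Type} (f : ℕ → List σ) : ℕ → List σ
  | 0 => []
  | n + 1 => prefixCat f n ++ f n

open Classical in
/-- The finite-or-infinite word `f 0 f 1 f 2 ⋯` obtained by concatenating all
the finite words `f i`. -/
noncomputable def flattenWords {σ : Type} [Inhabited σ] (f : ℕ → List σ) : FIWord σ :=
  if h : ∃ N, ∀ n, N ≤ n → f n = [] then Sum.inl (prefixCat f h.choose)
  else Sum.inr (fun k => (prefixCat f (sInf {n | k < (prefixCat f n).length})).getD k default)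

/-- `U^ω`: the set of countably infinite concatenations of elements of `U`. -/
noncomputable def omegaPow {σ : Type} [Inhabited σ] (U : Set (List σ)) : Set (FIWord σ) :=
  {w | ∃ f : ℕ → List σ, (∀ i, f i ∈ U) ∧ w = flattenWords f}

section Aux
variable {σ : Type}

theorem wcat_nil (v : FIWord σ) : wcat [] v = v := by
  cases v with
  | inl l => simp [wcat]; rfl
  | inr s => simp [wcat, Stream'.nil_append_stream]; rfl

theorem wcat_append (u v : List σ) (w : FIWord σ) :
    wcat (u ++ v) w = wcat u (wcat v w) := by
  cases w with
  | inl l => simp [wcat]; rfl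
  | inr s => simp [wcat, Stream'.append_append_stream]; rfl

theorem prefixCat_congr {f g : ℕ → List σ} {n : ℕ} (h : ∀ k < n, f k = g k) :
    prefixCat f n = prefixCat g n := by
  induction n with
  | zero => rfl
  | succ n ih =>
      simp only [prefixCat]
      rw [ih (fun k hk => h k (hk.trans (Nat.lt_succ_self n))), h n (Nat.lt_succ_self n)]

theorem prefixCat_add (f : ℕ → List σ) (n m : ℕ) :
    prefixCat f (n + m) = prefixCat f n ++ prefixCat (fun k => f (n + k)) m := by
  induction m with
  | zero => exact (List.append_nil _).symm
  | succ m ih =>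
      show prefixCat f (n + m) ++ f (n + m)
        = prefixCat f n ++ (prefixCat (fun k => f (n + k)) m ++ f (n + m))
      rw [ih, List.append_assoc]

theorem prefixCat_shift (f : ℕ → List σ) (n : ℕ) :
    prefixCat f (n + 1) = f 0 ++ prefixCat (fun k => f (k + 1)) n := by
  have h := prefixCat_add f 1 n
  rw [Nat.add_comm 1 n] at h
  rw [h]
  have h2 : (fun k => f (1 + k)) = (fun k => f (k + 1)) :=
    funext fun k => by rw [Nat.add_comm]
  rw [h2]
  show ([] ++ f 0) ++ _ = _
  rw [List.nil_append]

theorem prefixCat_prefix (f : ℕ → List σ) {m n : ℕ} (h : m ≤ n) :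
    prefixCat f m <+: prefixCat f n := by
  obtain ⟨k, rfl⟩ := Nat.exists_eq_add_of_le h
  rw [prefixCat_add]
  exact ⟨_, rfl⟩

theorem prefixCat_stable {f : ℕ → List σ} {N : ℕ} (hN : ∀ n, N ≤ n → f n = [])
    {m : ℕ} (hm : N ≤ m) : prefixCat f m = prefixCat f N := by
  obtain ⟨k, rfl⟩ := Nat.exists_eq_add_of_le hm
  rw [prefixCat_add]
  have : prefixCat (fun k => f (N + k)) k = [] := by
    induction k with
    | zero => rfl
    | succ k ih => simp [prefixCat, ih, hN (N + k) (Nat.le_add_right _ _)]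
  simp [this]

theorem length_prefixCat_mono (f : ℕ → List σ) {m n : ℕ} (h : m ≤ n) :
    (prefixCat f m).length ≤ (prefixCat f n).length :=
  (prefixCat_prefix f h).length_le

theorem length_prefixCat_unbounded {f : ℕ → List σ}
    (h : ¬∃ N, ∀ n, N ≤ n → f n = []) (k : ℕ) :
    ∃ n, k < (prefixCat f n).length := by
  push_neg at h
  induction k with
  | zero =>
      obtain ⟨n, -, hn⟩ := h 0
      refine ⟨n + 1, ?_⟩
      simp only [prefixCat, List.length_append]
      have : 0 < (f n).length := List.length_pos_iff.mpr hn
      omega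
  | succ k ih =>
      obtain ⟨n, hn⟩ := ih
      obtain ⟨m, hm, hm'⟩ := h n
      refine ⟨m + 1, ?_⟩
      have h1 : (prefixCat f n).length ≤ (prefixCat f m).length :=
        length_prefixCat_mono f hm
      have h2 : 0 < (f m).length := List.length_pos_iff.mpr hm'
      simp only [prefixCat, List.length_append]
      omega

theorem get_appendStream (l : List σ) (s : Stream' σ) (k : ℕ) (hk : k < l.length) :
    (l ++ₛ s) k = l[k] := by
  induction l generalizing k with
  | nil => simp at hk
  | cons a t ih =>
      cases k with
      | zero => rfl
      | succ k =>
          have h1 : ((a :: t) ++ₛ s) (k + 1) = (t ++ₛ s) k := by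
            rw [Stream'.cons_append_stream]
            exact Stream'.get_succ_cons k _ a
          rw [h1, ih k (by simpa using hk)]
          simp

theorem get_appendStream_right (l : List σ) (s : Stream' σ) (k : ℕ) :
    (l ++ₛ s) (l.length + k) = s k := by
  induction l with
  | nil => rw [Stream'.nil_append_stream]; simp
  | cons a t ih =>
      have h1 : ((a :: t) ++ₛ s) ((a :: t).length + k) = (t ++ₛ s) (t.length + k) := by
        rw [Stream'.cons_append_stream]
        have : (a :: t).length + k = (t.length + k) + 1 := by simp; omega
        rw [this]
        exact Stream'.get_succ_cons _ _ a
      rw [h1, ih]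

variable [Inhabited σ]

theorem flattenWords_eventually {f : ℕ → List σ} {N : ℕ} (hN : ∀ n, N ≤ n → f n = []) :
    flattenWords f = Sum.inl (prefixCat f N) := by
  have h : ∃ N, ∀ n, N ≤ n → f n = [] := ⟨N, hN⟩
  have e : flattenWords f = Sum.inl (prefixCat f h.choose) := dif_pos h
  rw [e]
  congr 1
  have hc := h.choose_spec
  calc prefixCat f h.choose = prefixCat f (max N h.choose) :=
        (prefixCat_stable hc (le_max_right _ _)).symm
    _ = prefixCat f N := prefixCat_stable hN (le_max_left _ _)

theorem flattenWords_infinite {f : ℕ → List σ} (h : ¬∃ N, ∀ n, N ≤ n → f n = []) :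
    ∃ s : Stream' σ, flattenWords f = Sum.inr s ∧
      ∀ m k, (hk : k < (prefixCat f m).length) → s k = (prefixCat f m)[k] := by
  have e : flattenWords f = Sum.inr (fun k => (prefixCat f (sInf {n | k < (prefixCat f n).length})).getD k default) := dif_neg h
  rw [e]
  refine ⟨_, rfl, fun m k hk => ?_⟩
  have hne : {n | k < (prefixCat f n).length}.Nonempty := ⟨m, hk⟩
  have hmem : k < (prefixCat f (sInf {n | k < (prefixCat f n).length})).length :=
    Nat.sInf_mem hne
  have hle : sInf {n | k < (prefixCat f n).length} ≤ m := Nat.sInf_le hk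
  have hpre := prefixCat_prefix f hle
  rw [List.getD_eq_getElem _ _ hmem]
  exact hpre.getElem hmem

theorem flattenWords_unique {f : ℕ → List σ} (h : ¬∃ N, ∀ n, N ≤ n → f n = [])
    {w : FIWord σ} (hw : ∀ n, ∃ v, w = wcat (prefixCat f n) v) :
    w = flattenWords f := by
  obtain ⟨s, hs, hget⟩ := flattenWords_infinite h
  cases w with
  | inl l =>
      obtain ⟨n, hn⟩ := length_prefixCat_unbounded h l.length
      obtain ⟨v, hv⟩ := hw n
      cases v with
      | inl t =>
          have hv' : l = prefixCat f n ++ t := Sum.inl.inj hv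
          rw [hv'] at hn
          simp [List.length_append] at hn
      | inr t => exact absurd hv (by simp [wcat])
  | inr t =>
      rw [hs]
      refine congrArg Sum.inr (funext fun k => ?_)
      obtain ⟨n, hn⟩ := length_prefixCat_unbounded h k
      obtain ⟨v, hv⟩ := hw n
      cases v with
      | inl l => exact absurd hv (by simp [wcat])
      | inr sv =>
          have hv' : t = prefixCat f n ++ₛ sv := Sum.inr.inj hv
          rw [hv', get_appendStream _ _ _ hn, hget n k hn]

theorem flattenWords_prefix (f : ℕ → List σ) (m : ℕ) :
    ∃ v, flattenWords f = wcat (prefixCat f m) v := by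
  by_cases h : ∃ N, ∀ n, N ≤ n → f n = []
  · obtain ⟨N, hN⟩ := h
    rw [flattenWords_eventually hN]
    rcases le_total m N with hmN | hNm
    · obtain ⟨t, ht⟩ := prefixCat_prefix f hmN
      exact ⟨Sum.inl t, by rw [← ht]; rfl⟩
    · rw [← prefixCat_stable hN hNm]
      exact ⟨Sum.inl [], by simp [wcat]; rfl⟩
  · obtain ⟨s, hs, hget⟩ := flattenWords_infinite h
    refine ⟨Sum.inr (fun k => s ((prefixCat f m).length + k)), ?_⟩
    rw [hs]
    refine congrArg Sum.inr (funext fun k => ?_)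
    rcases lt_or_ge k (prefixCat f m).length with hk | hk
    · exact (hget m k hk).trans (get_appendStream _ _ _ hk).symm
    · obtain ⟨j, rfl⟩ := Nat.exists_eq_add_of_le hk
      exact (get_appendStream_right (prefixCat f m)
        (fun k => s ((prefixCat f m).length + k)) j).symm

theorem flattenWords_shift_iter (f : ℕ → List σ) (n : ℕ) :
    flattenWords f = wcat (prefixCat f n) (flattenWords (fun k => f (n + k))) := by
  by_cases h : ∃ N, ∀ n, N ≤ n → f n = []
  · obtain ⟨N, hN⟩ := h
    have hg : ∀ m, N ≤ m → (fun k => f (n + k)) m = [] :=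
      fun m hm => hN (n + m) (le_add_self.trans (Nat.add_le_add_left hm n))
    rw [flattenWords_eventually hN, flattenWords_eventually hg]
    show Sum.inl (prefixCat f N)
      = Sum.inl (prefixCat f n ++ prefixCat (fun k => f (n + k)) N)
    rw [← prefixCat_add]
    exact congrArg Sum.inl (prefixCat_stable hN (Nat.le_add_left N n)).symm
  · have hg : ¬∃ N, ∀ m, N ≤ m → (fun k => f (n + k)) m = [] := by
      rintro ⟨N, hN⟩
      refine h ⟨n + N, fun m hm => ?_⟩
      have := hN (m - n) (by omega)
      simpa [Nat.add_sub_cancel' (by omega : n ≤ m)] using this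
    refine (flattenWords_unique h fun m => ?_).symm
    rcases le_total m n with hmn | hnm
    · obtain ⟨t, ht⟩ := prefixCat_prefix f hmn
      refine ⟨wcat t (flattenWords (fun k => f (n + k))), ?_⟩
      rw [← wcat_append, ht]
    · obtain ⟨j, rfl⟩ := Nat.exists_eq_add_of_le hnm
      obtain ⟨v, hv⟩ := flattenWords_prefix (fun k => f (n + k)) j
      refine ⟨v, ?_⟩
      rw [hv, ← wcat_append, ← prefixCat_add]

theorem prefixCat_nil {f : ℕ → List σ} {n : ℕ} (h : ∀ k < n, f k = []) :
    prefixCat f n = [] := by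
  induction n with
  | zero => rfl
  | succ n ih =>
      show prefixCat f n ++ f n = []
      rw [ih (fun k hk => h k (hk.trans (Nat.lt_succ_self n))), h n (Nat.lt_succ_self n)]
      rfl

theorem prefixCat_list (L : List (List σ)) :
    prefixCat (fun k => L.getD k []) L.length = L.flatten := by
  induction L with
  | nil => rfl
  | cons a t ih =>
      show prefixCat (fun k => (a :: t).getD k []) (t.length + 1) = a ++ t.flatten
      rw [prefixCat_shift]
      have h1 : (fun k => (a :: t).getD (k + 1) []) = (fun k => t.getD k []) := by
        funext k; simp [List.getD]
      have h2 : (a :: t).getD 0 [] = a := rfl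
      rw [h1, h2, ih]

theorem flattenWords_list {τ : Type} [Inhabited τ] (L : List (List τ)) :
    flattenWords (fun k => L.getD k []) = Sum.inl L.flatten := by
  have h : ∀ n, L.length ≤ n → (fun k => L.getD k []) n = [] :=
    fun n hn => List.getD_eq_default _ _ hn
  rw [flattenWords_eventually h, prefixCat_list]

theorem wcat_flatten_mem {τ : Type} [Inhabited τ] {U : Set (List τ)}
    (hε : [] ∈ U) (u : ℕ → List τ) (n : ℕ) (hu : ∀ i < n, u i ∈ U)
    (L : List (List τ)) (hL : ∀ v ∈ L, v ∈ U) :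
    wcat (prefixCat u n) (Sum.inl L.flatten) ∈ omegaPow U := by
  classical
  refine ⟨fun i => if i < n then u i else L.getD (i - n) [], fun i => ?_, ?_⟩
  · show (if i < n then u i else L.getD (i - n) []) ∈ U
    by_cases hi : i < n
    · rw [if_pos hi]; exact hu i hi
    · rw [if_neg hi]
      by_cases hiL : i - n < L.length
      · rw [List.getD_eq_getElem _ _ hiL]
        exact hL _ (List.getElem_mem hiL)
      · rw [List.getD_eq_default _ _ (le_of_not_gt hiL)]
        exact hε
  · rw [flattenWords_shift_iter _ n]
    have h1 : prefixCat (fun i => if i < n then u i else L.getD (i - n) []) n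
        = prefixCat u n :=
      prefixCat_congr fun k hk => if_pos hk
    have h2 : (fun k => if n + k < n then u (n + k) else L.getD (n + k - n) [])
        = (fun k => L.getD k []) := by
      funext k
      rw [if_neg (by omega), Nat.add_sub_cancel_left]
    rw [h1, h2, flattenWords_list]

end Aux

open Classical in
/-- `U^ω` is the greatest fixed point of `X ↦ L ∪ (U \\ {ε})·X` on the powerset
of finite-or-infinite words, where `L = U*` (embedded via `Sum.inl`) if `ε ∈ U`
and `L = ∅` otherwise. -/
theorem omegaPow_isGreatest_fixedPoint {σ : Type} [Fintype σ] [Inhabited σ]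
    (U : Set (List σ)) :
    IsGreatest
      {X : Set (FIWord σ) |
        (if ([] : List σ) ∈ U then Sum.inl '' star U else (∅ : Set (FIWord σ)))
          ∪ lcat (U \ {([] : List σ)}) X = X}
      (omegaPow U) := by
  constructor
  · -- omegaPow U is a fixed point
    apply Set.Subset.antisymm
    · -- F(Ω) ⊆ Ω
      rintro w (hw | hw)
      · -- left branch
        by_cases hε : ([] : List σ) ∈ U
        · change w ∈ (if ([] : List σ) ∈ U then (Sum.inl '' star U : Set (FIWord σ)) else ∅) at hw
          rw [if_pos hε] at hw
          obtain ⟨l, ⟨L, hL, rfl⟩, rfl⟩ := hw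
          have := wcat_flatten_mem hε (fun _ => []) 0 (by omega) L hL
          rw [show prefixCat (fun _ => ([] : List σ)) 0 = [] from rfl] at this
          exact this
        · change w ∈ (if ([] : List σ) ∈ U then (Sum.inl '' star U : Set (FIWord σ)) else ∅) at hw
          rw [if_neg hε] at hw
          exact absurd hw (Set.notMem_empty w)
      · -- right branch
        obtain ⟨a, ⟨haU, hane⟩, v, ⟨f, hf, rfl⟩, rfl⟩ := hw
        refine ⟨fun k => match k with | 0 => a | k + 1 => f k, fun i => ?_, ?_⟩
        · cases i with
          | zero => exact haU
          | succ i => exact hf i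
        · have h1 : prefixCat (fun k => match k with | 0 => a | k + 1 => f k) 1 = a := by
            show [] ++ a = a; rw [List.nil_append]
          have h2 : (fun k => (match (1 + k : ℕ) with | 0 => a | k + 1 => f k : List σ))
              = f := by
            funext k
            rw [Nat.add_comm]
          have key : flattenWords (fun k => match k with | 0 => a | k + 1 => f k)
              = wcat a (flattenWords f) := by
            rw [flattenWords_shift_iter (fun k => match k with | 0 => a | k + 1 => f k) 1,
              h1, h2]
          exact key.symm
    · -- Ω ⊆ F(Ω)
      rintro w ⟨f, hf, rfl⟩
      by_cases hall : ∀ i, f i = []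
      · have hε : ([] : List σ) ∈ U := hall 0 ▸ hf 0
        left
        change flattenWords f ∈ (if ([] : List σ) ∈ U then (Sum.inl '' star U : Set (FIWord σ)) else ∅)
        rw [if_pos hε]
        have : flattenWords f = Sum.inl (prefixCat f 0) :=
          flattenWords_eventually (N := 0) (fun n _ => hall n)
        rw [this]
        show Sum.inl [] ∈ _
        exact ⟨[], ⟨[], by simp, rfl⟩, rfl⟩
      · push_neg at hall
        have hex : ∃ i, f i ≠ [] := hall
        set n := Nat.find hex with hn
        have hne : f n ≠ [] := Nat.find_spec hex
        have hlt : ∀ k < n, f k = [] := fun k hk => by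
          by_contra hc
          have := Nat.find_min' hex hc
          omega
        right
        have heq : flattenWords f
            = wcat (f n) (flattenWords (fun k => f (n + (1 + k)))) := by
          rw [flattenWords_shift_iter f n, prefixCat_nil hlt, wcat_nil,
            flattenWords_shift_iter (fun k => f (n + k)) 1]
          have h1 : prefixCat (fun k => f (n + k)) 1 = f (n + 0) := by
            show [] ++ f (n + 0) = f (n + 0); rw [List.nil_append]
          rw [h1, Nat.add_zero]
        rw [heq]
        exact ⟨f n, ⟨hf n, hne⟩, flattenWords (fun k => f (n + (1 + k))),
          ⟨fun k => f (n + (1 + k)), fun k => hf _, rfl⟩, rfl⟩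
  · -- greatest
    intro X hX w hw
    set LX : Set (FIWord σ) :=
      (if ([] : List σ) ∈ U then Sum.inl '' star U else (∅ : Set (FIWord σ))) with hLX
    have hstep : ∀ v ∈ X, v ∈ LX ∨
        ∃ u, (u ∈ U ∧ u ≠ []) ∧ ∃ w', w' ∈ X ∧ v = wcat u w' := by
      intro v hv
      rw [← hX] at hv
      rcases hv with hv | hv
      · exact Or.inl hv
      · obtain ⟨u, hu, w', hw', rfl⟩ := hv
        exact Or.inr ⟨u, ⟨hu.1, hu.2⟩, w', hw', rfl⟩
    let d : FIWord σ → List σ × FIWord σ := fun v =>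
      if h : ∃ u, (u ∈ U ∧ u ≠ []) ∧ ∃ w', w' ∈ X ∧ v = wcat u w'
      then (h.choose, h.choose_spec.2.choose) else ([], v)
    have hd : ∀ v ∈ X, v ∉ LX →
        ((d v).1 ∈ U ∧ (d v).1 ≠ []) ∧ (d v).2 ∈ X ∧ v = wcat (d v).1 (d v).2 := by
      intro v hv hvL
      have h : ∃ u, (u ∈ U ∧ u ≠ []) ∧ ∃ w', w' ∈ X ∧ v = wcat u w' :=
        (hstep v hv).resolve_left hvL
      have hspec1 := h.choose_spec.1
      have hspec2 := h.choose_spec.2.choose_spec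
      simp only [d, dif_pos h]
      exact ⟨hspec1, hspec2.1, hspec2.2⟩
    let seq : ℕ → FIWord σ := fun m => (fun v => (d v).2)^[m] w
    let u : ℕ → List σ := fun m => (d (seq m)).1
    have hseq_succ : ∀ m, seq (m + 1) = (d (seq m)).2 := fun m =>
      Function.iterate_succ_apply' _ m w
    have hinv : ∀ m, (∀ k < m, seq k ∉ LX) →
        seq m ∈ X ∧ w = wcat (prefixCat u m) (seq m) ∧ ∀ k < m, u k ∈ U ∧ u k ≠ [] := by
      intro m
      induction m with
      | zero =>
          intro _
          exact ⟨hw, (wcat_nil w).symm, by omega⟩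
      | succ m ih =>
          intro hnL
          obtain ⟨h1, h2, h3⟩ := ih (fun k hk => hnL k (hk.trans (Nat.lt_succ_self m)))
          obtain ⟨⟨hu1, hu2⟩, hd1, hd2⟩ := hd _ h1 (hnL m (Nat.lt_succ_self m))
          refine ⟨by rw [hseq_succ]; exact hd1, ?_, ?_⟩
          · rw [h2, hd2, ← hseq_succ m]
            show wcat (prefixCat u m) (wcat (u m) (seq (m + 1)))
              = wcat (prefixCat u m ++ u m) (seq (m + 1))
            rw [wcat_append]
          · intro k hk
            rcases Nat.lt_succ_iff_lt_or_eq.mp hk with hk' | rfl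
            · exact h3 k hk'
            · exact ⟨hu1, hu2⟩
    by_cases hterm : ∃ m, seq m ∈ LX
    · set n := Nat.find hterm with hn
      have hmem : seq n ∈ LX := Nat.find_spec hterm
      have hmin : ∀ k < n, seq k ∉ LX := fun k hk => by
        by_contra hc
        have := Nat.find_min' hterm hc
        omega
      obtain ⟨-, h2, h3⟩ := hinv n hmin
      have hε : ([] : List σ) ∈ U := by
        by_contra hc
        rw [hLX, if_neg hc] at hmem
        exact hmem
      rw [hLX, if_pos hε] at hmem
      obtain ⟨l, ⟨L, hL, rfl⟩, hlw⟩ := hmem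
      rw [h2, ← hlw]
      exact wcat_flatten_mem hε u n (fun i hi => (h3 i hi).1) L hL
    · have hterm2 : ∀ m, seq m ∉ LX := fun m hm => hterm ⟨m, hm⟩
      have hinv' : ∀ m, seq m ∈ X ∧ w = wcat (prefixCat u m) (seq m) ∧
          ∀ k < m, u k ∈ U ∧ u k ≠ [] :=
        fun m => hinv m (fun k _ => hterm2 k)
      have hU : ∀ i, u i ∈ U := fun i => ((hinv' (i + 1)).2.2 i (Nat.lt_succ_self i)).1
      have hnotev : ¬∃ N, ∀ m, N ≤ m → u m = [] := by
        rintro ⟨N, hN⟩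
        exact ((hinv' (N + 1)).2.2 N (Nat.lt_succ_self N)).2 (hN N le_rfl)
      exact ⟨u, hU, flattenWords_unique hnotev (fun m => ⟨seq m, (hinv' m).2.1⟩)⟩
end

section
/- In a Büchi abstraction, the abstraction of the Kleene star equals the star of the abstraction: α_*(A*) = (α_*(A))*, where the star on the abstract side is defined as the least fixed point A* = lfp(λX. α_*({ε}) ⊔ A·X). -/
/-- A Büchi algebra: two join-semilattices with a monotone associative
concatenation on `Mf`, a monotone action of `Mf` on `Mo`, and a monotone
ω-iteration `Mf → Mo`. -/
structure BuchiAlgebra (Mf Mo : Type*) [SemilatticeSup Mf] [SemilatticeSup Mo] where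
  cat : Mf → Mf → Mf
  act : Mf → Mo → Mo
  omega : Mf → Mo
  cat_mono : ∀ {a b c d : Mf}, a ≤ b → c ≤ d → cat a c ≤ cat b d
  act_mono : ∀ {a b : Mf} {u v : Mo}, a ≤ b → u ≤ v → act a u ≤ act b v
  omega_mono : Monotone omega
  cat_assoc : ∀ a b c : Mf, cat a (cat b c) = cat (cat a b) c
  act_assoc : ∀ (a b : Mf) (v : Mo), act a (act b v) = act (cat a b) v

/-- A Büchi abstraction: a finite Büchi algebra equipped with Galois insertions
to the powersets of finite words and of finite-or-infinite words, whose
abstraction functions are compatible with concatenation and ω-iteration. -/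
structure BuchiAbstraction (σ : Type) [Inhabited σ] (Mf Mo : Type*)
    [SemilatticeSup Mf] [SemilatticeSup Mo] [Finite Mf] [Finite Mo]
    extends BuchiAlgebra Mf Mo where
  αf : Set (List σ) → Mf
  γf : Mf → Set (List σ)
  αo : Set (FIWord σ) → Mo
  γo : Mo → Set (FIWord σ)
  gif : GaloisInsertion αf γf
  gio : GaloisInsertion αo γo
  αf_cat : ∀ A B : Set (List σ), αf (lcatF A B) = cat (αf A) (αf B)
  αo_cat : ∀ (A : Set (List σ)) (V : Set (FIWord σ)), αo (lcat A V) = act (αf A) (αo V)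
  αo_omega : ∀ A : Set (List σ), αo (omegaPow A) = omega (αf A)

lemma star_eq {σ : Type} (A : Set (List σ)) :
    star A = {([] : List σ)} ∪ lcatF A (star A) := by
  ext w
  constructor
  · rintro ⟨L, hL, rfl⟩
    cases L with
    | nil => left; rfl
    | cons u L' =>
      right
      exact ⟨u, hL u (by simp), L'.flatten, ⟨L', fun v hv => hL v (by simp [hv]), rfl⟩,
        by simp [List.flatten]⟩
  · rintro (h | ⟨u, hu, v, ⟨L, hL, rfl⟩, rfl⟩)
    · exact ⟨[], by simp, by simpa using h⟩
    · exact ⟨u :: L, fun x hx => by rcases List.mem_cons.mp hx with rfl | hx; exact hu; exact hL x hx,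
        by simp [List.flatten]⟩

/-- In a Büchi abstraction, the abstraction of the Kleene star `α_*(A*)` is the
least fixed point of `X ↦ α_*({ε}) ⊔ α_*(A)·X`, i.e. it equals the abstract
Kleene star `(α_*(A))* = lfp (λ X, α_*({ε}) ⊔ α_*(A)·X)`. -/
theorem abstraction_star {σ : Type} [Inhabited σ] {Mf Mo : Type*}
    [SemilatticeSup Mf] [SemilatticeSup Mo] [Finite Mf] [Finite Mo]
    (B : BuchiAbstraction σ Mf Mo) (A : Set (List σ)) :
    IsLeast {X : Mf | B.αf {([] : List σ)} ⊔ B.cat (B.αf A) X = X}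
      (B.αf (star A)) := by
  constructor
  · show _ = _
    conv_rhs => rw [star_eq A]
    rw [show ({([] : List σ)} ∪ lcatF A (star A)) = ({([] : List σ)} ⊔ lcatF A (star A)) from rfl,
      B.gif.gc.l_sup, B.αf_cat]
  · intro X hX
    have hX' : B.αf {([] : List σ)} ⊔ B.cat (B.αf A) X = X := hX
    have h1 : B.αf {([] : List σ)} ≤ X := le_sup_left.trans (le_of_eq hX')
    have h2 : B.cat (B.αf A) X ≤ X := le_sup_right.trans (le_of_eq hX')
    have hsub : lcatF A (B.γf X) ⊆ B.γf X := by
      exact (B.gif.gc _ X).mp (by rw [B.αf_cat, B.gif.l_u_eq]; exact h2)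
    have heps : ([] : List σ) ∈ B.γf X := by
      exact (B.gif.gc _ X).mp h1 rfl
    refine (B.gif.gc _ X).mpr ?_
    rintro w ⟨L, hL, rfl⟩
    clear hX hX'
    induction L with
    | nil => exact heps
    | cons u L' ih =>
      have : u ++ L'.flatten ∈ lcatF A (B.γf X) :=
        ⟨u, hL u (by simp), L'.flatten, ih (fun v hv => hL v (by simp [hv])), rfl⟩
      simpa [List.flatten] using hsub this
end

section
/- For the equation X = a⁺·X over the two carriers: solved in the finite Büchi algebra M_{≤ω} = {∅, {ε}, a⁺, a*, a^ω, {ε}∪a^ω, a⁺∪a^ω, a*∪a^ω} (ordered by inclusion, with concatenation the usual language concatenation restricted to these sets), the greatest solution is a⁺ ∪ a^ω; but solved in P(Σ^{≤ω}) with Σ = {a}, the greatest solution is a^ω. Hence a^ω ⊊ gfp computed in the abstraction. -/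
section Example
/-- `{ε}` as a set of finite-or-infinite words over the one-letter alphabet. -/
def epsSet : Set (FIWord Unit) := {Sum.inl ([] : List Unit)}
/-- `a⁺`: the nonempty finite words. -/
def aPlus : Set (FIWord Unit) := {w | ∃ l : List Unit, l ≠ [] ∧ w = Sum.inl l}
/-- `a*`: all finite words. -/
def aStar : Set (FIWord Unit) := {w | ∃ l : List Unit, w = Sum.inl l}
/-- `a^ω`: the infinite word `aaa…`. -/
def aOmega : Set (FIWord Unit) := Set.range Sum.inr

/-- The eight-element carrier `M_{≤ω}` of the Büchi abstraction. -/
def Mcarrier : Set (Set (FIWord Unit)) :=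
  {∅, epsSet, aPlus, aStar, aOmega, epsSet ∪ aOmega, aPlus ∪ aOmega, aStar ∪ aOmega}

/-- Abstraction into `M_{≤ω}`: the least element of the family containing a
given language. -/
def absM (X : Set (FIWord Unit)) : Set (FIWord Unit) :=
  ⋂₀ {Y | Y ∈ Mcarrier ∧ X ⊆ Y}

lemma lcat_sub (X : Set (FIWord Unit)) :
    lcat {l : List Unit | l ≠ []} X ⊆ aPlus ∪ aOmega := by
  rintro w ⟨u, hu, v, hv, rfl⟩
  cases v with
  | inl l =>
      exact Or.inl ⟨u ++ l, fun h => hu (List.append_eq_nil_iff.mp h).1, rfl⟩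
  | inr s => exact Or.inr ⟨_, rfl⟩

lemma mem_Mcarrier_plus_omega : aPlus ∪ aOmega ∈ Mcarrier := by
  simp [Mcarrier]

lemma absM_fix :
    absM (lcat {l : List Unit | l ≠ []} (aPlus ∪ aOmega)) = aPlus ∪ aOmega := by
  apply subset_antisymm
  · exact Set.sInter_subset_of_mem ⟨mem_Mcarrier_plus_omega, lcat_sub _⟩
  · intro x hx Y hY
    obtain ⟨hYm, hsub⟩ := hY
    have h1 : (Sum.inl [(), ()] : FIWord Unit) ∈
        lcat {l : List Unit | l ≠ []} (aPlus ∪ aOmega) :=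
      ⟨[()], by simp, Sum.inl [()], Or.inl ⟨[()], by simp, rfl⟩, rfl⟩
    have h2 : (Sum.inr (fun _ => ()) : FIWord Unit) ∈
        lcat {l : List Unit | l ≠ []} (aPlus ∪ aOmega) := by
      refine ⟨[()], by simp, Sum.inr (fun _ => ()), Or.inr ⟨_, rfl⟩, ?_⟩
      show (Sum.inr _ : FIWord Unit) = Sum.inr _
      exact congrArg Sum.inr (funext fun n => rfl)
    have hh1 := hsub h1
    have hh2 := hsub h2
    simp only [Mcarrier, Set.mem_insert_iff, Set.mem_singleton_iff] at hYm
    rcases hYm with rfl | rfl | rfl | rfl | rfl | rfl | rfl | rfl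
    · exact absurd hh1 (Set.notMem_empty _)
    · exact absurd (Sum.inl.inj hh1) (by simp)
    · obtain ⟨l, _, hl⟩ := hh2; exact absurd hl (by simp)
    · obtain ⟨l, hl⟩ := hh2; exact absurd hl (by simp)
    · obtain ⟨s, hs⟩ := hh1; exact absurd hs (by simp)
    · rcases hh1 with h | h
      · exact absurd (Sum.inl.inj h) (by simp)
      · obtain ⟨s, hs⟩ := h; exact absurd hs (by simp)
    · exact hx
    · rcases hx with h | h
      · obtain ⟨l, _, rfl⟩ := h; exact Or.inl ⟨l, rfl⟩
      · exact Or.inr h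

lemma no_finite (X : Set (FIWord Unit))
    (hX : lcat {l : List Unit | l ≠ []} X = X) :
    ∀ l : List Unit, Sum.inl l ∉ X := by
  have key : ∀ n (l : List Unit), l.length ≤ n → Sum.inl l ∉ X := by
    intro n
    induction n with
    | zero =>
        intro l hl hmem
        rw [← hX] at hmem
        obtain ⟨u, hu, v, hv, heq⟩ := hmem
        cases v with
        | inl l' =>
            have : l = u ++ l' := Sum.inl.inj heq
            have : u = [] := by
              cases u with
              | nil => rfl
              | cons a t => simp [this] at hl
            exact hu this
        | inr s => exact absurd heq (by simp [wcat])
    | succ n ih =>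
        intro l hl hmem
        rw [← hX] at hmem
        obtain ⟨u, hu, v, hv, heq⟩ := hmem
        cases v with
        | inl l' =>
            have hll : l = u ++ l' := Sum.inl.inj heq
            have hul : 1 ≤ u.length := by
              cases u with
              | nil => exact absurd rfl hu
              | cons a t => simp
            have : l'.length ≤ n := by
              have := hl
              rw [hll, List.length_append] at this
              omega
            exact ih l' this hv
        | inr s => exact absurd heq (by simp [wcat])
  exact fun l => key l.length l le_rfl

lemma lcat_omega : lcat {l : List Unit | l ≠ []} aOmega = aOmega := by
  apply subset_antisymm
  · rintro w ⟨u, hu, v, ⟨s, rfl⟩, rfl⟩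
    exact ⟨_, rfl⟩
  · rintro w ⟨s, rfl⟩
    refine ⟨[()], by simp, Sum.inr s, ⟨s, rfl⟩, ?_⟩
    show (Sum.inr _ : FIWord Unit) = Sum.inr _
    exact congrArg Sum.inr (funext fun n => rfl)

/-- For the equation `X = a⁺·X`: solved in the finite Büchi algebra `M_{≤ω}`
(using the abstracted concatenation), the greatest solution is `a⁺ ∪ a^ω`; but
solved in `P(Σ^{≤ω})` with `Σ = {a}`, the greatest solution is `a^ω`.  Hence
`a^ω` is strictly below the gfp computed in the abstraction. -/
theorem abstraction_loses_gfp :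
    IsGreatest {X | X ∈ Mcarrier ∧ absM (lcat {l : List Unit | l ≠ []} X) = X}
      (aPlus ∪ aOmega) ∧
    IsGreatest {X : Set (FIWord Unit) | lcat {l : List Unit | l ≠ []} X = X}
      aOmega ∧
    aOmega ⊂ aPlus ∪ aOmega := by
  refine ⟨⟨⟨mem_Mcarrier_plus_omega, absM_fix⟩, ?_⟩,
    ⟨lcat_omega, ?_⟩, ?_, ?_⟩
  · -- upper bound in the abstraction
    rintro X ⟨hXm, hfix⟩
    calc X = absM (lcat {l : List Unit | l ≠ []} X) := hfix.symm
    _ ⊆ aPlus ∪ aOmega :=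
      Set.sInter_subset_of_mem ⟨mem_Mcarrier_plus_omega, lcat_sub _⟩
  · -- upper bound in the concrete powerset
    intro X hX w hw
    cases w with
    | inl l => exact absurd hw (no_finite X hX l)
    | inr s => exact ⟨s, rfl⟩
  · exact Set.subset_union_right
  · intro h
    have : (Sum.inl [()] : FIWord Unit) ∈ aOmega :=
      h (Or.inl ⟨[()], by simp, rfl⟩)
    obtain ⟨s, hs⟩ := this
    exact absurd hs (by simp)

end Example
end
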